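/- For all real numbers c > -1 and X ≥ 1, the improper integral ∫₁^∞ dT/(√T · √(T+c) · (√(X+c)+√(T+c))) converges and equals (2/√X) · log( (√(X+c)+√X)·(√X+1) / (√X·√(1+c)+√(X+c)) ). -/

import Mathlib

open MeasureTheory

/-- For all real `c > -1` and `X ≥ 1`, the improper integral
`∫₁^∞ dT/(√T · √(T+c) · (√(X+c)+√(T+c)))` converges and equals
`(2/√X) · log((√(X+c)+√X)(√X+1)/(√X·√(1+c)+√(X+c)))`. -/
theorem stmt_0 (c X : ℝ) (hc : -1 < c) (hX : 1 ≤ X) :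
    IntegrableOn
      (fun T => 1 / (Real.sqrt T * Real.sqrt (T + c) * (Real.sqrt (X + c) + Real.sqrt (T + c))))
      (Set.Ioi 1) ∧
    ∫ T in Set.Ioi (1 : ℝ),
        1 / (Real.sqrt T * Real.sqrt (T + c) * (Real.sqrt (X + c) + Real.sqrt (T + c)))
      = (2 / Real.sqrt X) *
        Real.log ((Real.sqrt (X + c) + Real.sqrt X) * (Real.sqrt X + 1) /
          (Real.sqrt X * Real.sqrt (1 + c) + Real.sqrt (X + c))) := by
  have hX0 : (0:ℝ) < X := by linarith
  have hXc : (0:ℝ) < X + c := by linarith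
  have h1c : (0:ℝ) < 1 + c := by linarith
  set a := Real.sqrt (X + c) with ha_def
  set x := Real.sqrt X with hx_def
  have ha0 : 0 < a := Real.sqrt_pos.2 hXc
  have hx0 : 0 < x := Real.sqrt_pos.2 hX0
  have hx1 : 1 ≤ x := by
    rw [hx_def, show (1:ℝ) = Real.sqrt 1 by simp]
    exact Real.sqrt_le_sqrt hX
  have ha2 : a ^ 2 = X + c := Real.sq_sqrt hXc.le
  have hx2 : x ^ 2 = X := Real.sq_sqrt hX0.le
  -- antiderivative
  set g : ℝ → ℝ := fun T => (2 / x) *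
    (Real.log (a * Real.sqrt (T + c) + x * Real.sqrt T + c)
      - Real.log (Real.sqrt (T + c) + a)) with hg_def
  set g' : ℝ → ℝ := fun T =>
    1 / (Real.sqrt T * Real.sqrt (T + c) * (a + Real.sqrt (T + c))) with hg'_def
  -- positivity facts on [1, ∞)
  have hNpos : ∀ T : ℝ, 1 ≤ T →
      0 < a * Real.sqrt (T + c) + x * Real.sqrt T + c := by
    intro T hT1
    have hTc : (0:ℝ) < T + c := by linarith
    have ht0 : 0 < Real.sqrt (T + c) := Real.sqrt_pos.2 hTc
    have hs1 : 1 ≤ Real.sqrt T := by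
      rw [show (1:ℝ) = Real.sqrt 1 by simp]; exact Real.sqrt_le_sqrt hT1
    have : 1 ≤ x * Real.sqrt T := one_le_mul_of_one_le_of_one_le hx1 hs1
    nlinarith [mul_pos ha0 ht0]
  have hDpos : ∀ T : ℝ, 1 ≤ T → 0 < Real.sqrt (T + c) + a := by
    intro T hT1
    have hTc : (0:ℝ) < T + c := by linarith
    have := Real.sqrt_pos.2 hTc
    linarith
  have key : ∀ T ∈ Set.Ici (1:ℝ), HasDerivAt g (g' T) T := by
    intro T hT
    have hT1 : (1:ℝ) ≤ T := hT
    have hT0 : (0:ℝ) < T := by linarith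
    have hTc : (0:ℝ) < T + c := by linarith
    have hs0 : 0 < Real.sqrt T := Real.sqrt_pos.2 hT0
    have ht0 : 0 < Real.sqrt (T + c) := Real.sqrt_pos.2 hTc
    have hs2 : (Real.sqrt T) ^ 2 = T := Real.sq_sqrt hT0.le
    have ht2 : (Real.sqrt (T + c)) ^ 2 = T + c := Real.sq_sqrt hTc.le
    have hN := hNpos T hT1
    have hD := hDpos T hT1
    have hds : HasDerivAt (fun T : ℝ => Real.sqrt T) (1 / (2 * Real.sqrt T)) T :=
      Real.hasDerivAt_sqrt hT0.ne'
    have hdt : HasDerivAt (fun T : ℝ => Real.sqrt (T + c)) (1 / (2 * Real.sqrt (T + c))) T := by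
      have := (Real.hasDerivAt_sqrt hTc.ne').comp T ((hasDerivAt_id T).add_const c)
      simpa [Function.comp_def] using this
    have hdN : HasDerivAt (fun T : ℝ => a * Real.sqrt (T + c) + x * Real.sqrt T + c)
        (a * (1 / (2 * Real.sqrt (T + c))) + x * (1 / (2 * Real.sqrt T))) T :=
      ((hdt.const_mul a).add (hds.const_mul x)).add_const c
    have hdD : HasDerivAt (fun T : ℝ => Real.sqrt (T + c) + a)
        (1 / (2 * Real.sqrt (T + c))) T := hdt.add_const a
    have hmain := ((hdN.log hN.ne').sub (hdD.log hD.ne')).const_mul (2 / x)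
    refine HasDerivAt.congr_deriv hmain ?_
    symm
    rw [hg'_def]
    have hN3 : Real.sqrt (T + c) * a + Real.sqrt T * x + c ≠ 0 := by linarith
    field_simp
    linear_combination (a + Real.sqrt (T+c)) *
      (Real.sqrt T * (hx2 - ha2) + x * (hs2 - ht2))
  have hpos : ∀ T ∈ Set.Ioi (1:ℝ), 0 ≤ g' T := by
    intro T hT
    have hT0 : (0:ℝ) < T := by have := hT.out; linarith
    have hTc : (0:ℝ) < T + c := by have := hT.out; linarith
    have hs0 : 0 < Real.sqrt T := Real.sqrt_pos.2 hT0
    have ht0 : 0 < Real.sqrt (T + c) := Real.sqrt_pos.2 hTc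
    positivity
  -- limit at infinity
  have hsqtop : Filter.Tendsto Real.sqrt Filter.atTop Filter.atTop := by
    refine Filter.tendsto_atTop_atTop.mpr fun b => ⟨(max b 0) ^ 2, fun y hy => ?_⟩
    calc b ≤ max b 0 := le_max_left b 0
    _ = Real.sqrt ((max b 0) ^ 2) := by rw [Real.sqrt_sq (le_max_right b 0)]
    _ ≤ Real.sqrt y := Real.sqrt_le_sqrt hy
  have hinv : Filter.Tendsto (fun T : ℝ => 1 / Real.sqrt T) Filter.atTop (nhds 0) :=
    tendsto_const_nhds.div_atTop hsqtop
  have hone : Filter.Tendsto (fun T : ℝ => Real.sqrt ((T + c) / T)) Filter.atTop (nhds 1) := by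
    have h1 : Filter.Tendsto (fun T : ℝ => (T + c) / T) Filter.atTop (nhds 1) := by
      have heq : (fun T : ℝ => (T + c) / T) =ᶠ[Filter.atTop] fun T => 1 + c * (1 / T) := by
        filter_upwards [Filter.eventually_gt_atTop 0] with T hT
        field_simp
      rw [Filter.tendsto_congr' heq]
      have : Filter.Tendsto (fun T : ℝ => 1 / T) Filter.atTop (nhds 0) :=
        tendsto_const_nhds.div_atTop Filter.tendsto_id
      simpa using tendsto_const_nhds.add (this.const_mul c)
    simpa using h1.sqrt
  have hratio : Filter.Tendsto
      (fun T => (a * Real.sqrt (T + c) + x * Real.sqrt T + c) / (Real.sqrt (T + c) + a))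
      Filter.atTop (nhds (a + x)) := by
    have hnum : Filter.Tendsto
        (fun T : ℝ => a * Real.sqrt ((T + c) / T) + x + c * (1 / Real.sqrt T))
        Filter.atTop (nhds (a * 1 + x + c * 0)) :=
      (((hone.const_mul a).add tendsto_const_nhds).add (hinv.const_mul c))
    have hden : Filter.Tendsto
        (fun T : ℝ => Real.sqrt ((T + c) / T) + a * (1 / Real.sqrt T))
        Filter.atTop (nhds (1 + a * 0)) :=
      hone.add (hinv.const_mul a)
    have hdiv := hnum.div hden (by norm_num)
    simp only [mul_one, mul_zero, add_zero, div_one] at hdiv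
    refine hdiv.congr' ?_
    filter_upwards [Filter.eventually_ge_atTop 1] with T hT1
    have hT0 : (0:ℝ) < T := by linarith
    have hTc : (0:ℝ) < T + c := by linarith
    have hs0 : 0 < Real.sqrt T := Real.sqrt_pos.2 hT0
    have ht0 : 0 < Real.sqrt (T + c) := Real.sqrt_pos.2 hTc
    have hsd : Real.sqrt ((T + c) / T) = Real.sqrt (T + c) / Real.sqrt T :=
      Real.sqrt_div hTc.le T
    simp only [Pi.div_apply]
    rw [hsd]
    rw [div_eq_div_iff (by positivity) (by positivity)]
    field_simp
  have hlim : Filter.Tendsto g Filter.atTop (nhds ((2 / x) * Real.log (a + x))) := by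
    have hlog := (Real.continuousAt_log (by positivity : a + x ≠ 0)).tendsto.comp hratio
    have := hlog.const_mul (2 / x)
    refine this.congr' ?_
    filter_upwards [Filter.eventually_ge_atTop 1] with T hT1
    have hN := hNpos T hT1
    have hD := hDpos T hT1
    simp only [Function.comp_apply, hg_def]
    rw [Real.log_div hN.ne' hD.ne']
  have hint := integrableOn_Ioi_deriv_of_nonneg' key hpos hlim
  have hval := integral_Ioi_of_hasDerivAt_of_nonneg' key hpos hlim
  refine ⟨hint, ?_⟩
  rw [hval]
  -- evaluate g 1 and finish with an algebraic log identity
  have hs1c0 : 0 < Real.sqrt (1 + c) := Real.sqrt_pos.2 h1c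
  have hs1c2 : (Real.sqrt (1 + c)) ^ 2 = 1 + c := Real.sq_sqrt h1c.le
  have hN1 := hNpos 1 le_rfl
  have hD1 := hDpos 1 le_rfl
  rw [hg_def]
  simp only [Real.sqrt_one, mul_one]
  have hN1' : 0 < a * Real.sqrt (1 + c) + x + c := by simpa using hN1
  have hD1' : 0 < Real.sqrt (1 + c) + a := hD1
  have hden' : 0 < x * Real.sqrt (1 + c) + a := by positivity
  have hax : 0 < a + x := by positivity
  have hargeq : (a + x) * (Real.sqrt (1 + c) + a) / (a * Real.sqrt (1 + c) + x + c)
      = (a + x) * (x + 1) / (x * Real.sqrt (1 + c) + a) := by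
    rw [div_eq_div_iff hN1'.ne' hden'.ne']
    linear_combination (a + x) * (hs1c2 * x + ha2 - hx2)
  have hlogeq : Real.log (a + x) -
      (Real.log (a * Real.sqrt (1 + c) + x + c) - Real.log (Real.sqrt (1 + c) + a))
      = Real.log ((a + x) * (x + 1) / (x * Real.sqrt (1 + c) + a)) := by
    rw [← hargeq, Real.log_div (by positivity) hN1'.ne', Real.log_mul hax.ne' hD1'.ne']
    ring
  rw [← hlogeq]
  ring
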